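/- Let z = a + is with a, s ∈ ℝ, |a| ≥ 1/2, and let y ∈ ℝ. Then |z² + y²|² = (y² − s²)² + a⁴ + 2y²a² + 2a²s², and consequently |z² + y²|² ≥ max((1 + y²)/16, |z|²/4). -/

import Mathlib

theorem stmt_3 (a s y : ℝ) (ha : 1 / 2 ≤ |a|) (z : ℂ) (hz : z = (a : ℂ) + (s : ℂ) * Complex.I) :
    ‖z ^ 2 + (y : ℂ) ^ 2‖ ^ 2
      = (y ^ 2 - s ^ 2) ^ 2 + a ^ 4 + 2 * y ^ 2 * a ^ 2 + 2 * a ^ 2 * s ^ 2 ∧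
    max ((1 + y ^ 2) / 16) (‖z‖ ^ 2 / 4)
      ≤ ‖z ^ 2 + (y : ℂ) ^ 2‖ ^ 2 := by
  subst hz
  have ha2 : 1 / 4 ≤ a ^ 2 := by
    have := sq_abs a
    nlinarith [sq_nonneg (|a| - 1/2)]
  have h1 : ‖((a : ℂ) + (s : ℂ) * Complex.I) ^ 2 + (y : ℂ) ^ 2‖ ^ 2
      = (y ^ 2 - s ^ 2) ^ 2 + a ^ 4 + 2 * y ^ 2 * a ^ 2 + 2 * a ^ 2 * s ^ 2 := by
    rw [← Complex.normSq_eq_norm_sq]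
    simp [Complex.normSq_apply, Complex.add_re, Complex.add_im, pow_two]
    ring
  have h2 : ‖(a : ℂ) + (s : ℂ) * Complex.I‖ ^ 2 = a ^ 2 + s ^ 2 := by
    rw [← Complex.normSq_eq_norm_sq]
    simp [Complex.normSq_apply]
    ring
  refine ⟨h1, ?_⟩
  rw [h1, h2, max_le_iff]
  constructor <;> nlinarith [sq_nonneg y, sq_nonneg s, sq_nonneg (y^2 - s^2), sq_nonneg a]
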